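/- arXiv:1404.3645 — 2 statements merged into one kernel-verified Lean document; each statement's English description precedes it below -/
import Mathlib

section
/- (Pathwise Föllmer–Itô formula.) Let 1 ≤ p < 3, γ ∈ [0,1], and (π_n) an increasing sequence of partitions of [0,T] with mesh → 0. Let F ∈ C²(R^d, R) with α-Hölder continuous D²F for some α > max{p−2, 0}, and X ∈ V^p([0,T], R^d) with quadratic variation along (π_n). Then F(X_T) = F(X_0) + γ-∫_0^T DF(X_t) d^{π_n} X_t − ½(2γ−1) Σ_{1≤i,j≤d} ∫_0^T D²_{i,j}F(X_s) d^{π_n}[X^i,X^j]_s, where γ-∫_0^T DF(X_t) d^{π_n} X_t = lim_{n→∞} Σ_{[s,t]∈π_n} ⟨DF(X_s) + γ(DF(X_t)−DF(X_s)), X_t−X_s⟩. -/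
open Finset Filter Topology

/-- A partition of `[a,b]` given by finitely many monotone grid points. -/
structure GridPartition (a b : ℝ) where
  n : ℕ
  t : Fin (n + 1) → ℝ
  mono : Monotone t
  first : t 0 = a
  last : t (Fin.last n) = b

namespace GridPartition

variable {a b : ℝ}

/-- The mesh of a partition: the largest interval length. -/
noncomputable def mesh (π : GridPartition a b) : ℝ :=
  ⨆ i : Fin π.n, (π.t i.succ - π.t i.castSucc)

/-- The Riemann-type sum `∑_{[s,t] ∈ π} F s t` over the intervals of a partition. -/
def rsum {E : Type*} [AddCommMonoid E] (π : GridPartition a b) (F : ℝ → ℝ → E) : E :=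
  ∑ i : Fin π.n, F (π.t i.castSucc) (π.t i.succ)

end GridPartition

/-- `RiemannLimit a b F L`: the Riemann-type sums of `F` over partitions of `[a,b]`
converge to `L` as the mesh tends to `0`. -/
def RiemannLimit {E : Type*} [SeminormedAddCommGroup E] (a b : ℝ) (F : ℝ → ℝ → E)
    (L : E) : Prop :=
  ∀ ε > 0, ∃ δ > 0, ∀ π : GridPartition a b, π.mesh < δ → ‖π.rsum F - L‖ < ε

/-- `X` has finite `p`-variation on `[a,b]` (boundedness of the partition sums). -/
def FinitePVar {E : Type*} [SeminormedAddCommGroup E] (p a b : ℝ) (X : ℝ → E) : Prop :=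
  ∃ M : ℝ, ∀ π : GridPartition a b,
    (∑ i : Fin π.n, ‖X (π.t i.succ) - X (π.t i.castSucc)‖ ^ p) ≤ M

/-- `X ∈ 𝒱^p([a,b])`: continuous and of finite `p`-variation. -/
def MemVp {E : Type*} [SeminormedAddCommGroup E] (p a b : ℝ) (X : ℝ → E) : Prop :=
  ContinuousOn X (Set.Icc a b) ∧ FinitePVar p a b X

/-- Finite `r`-variation for a two-parameter (remainder) function. -/
def FiniteRVar2 {E : Type*} [SeminormedAddCommGroup E] (r a b : ℝ) (R : ℝ → ℝ → E) : Prop :=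
  ∃ M : ℝ, ∀ π : GridPartition a b,
    (∑ i : Fin π.n, ‖R (π.t i.castSucc) (π.t i.succ)‖ ^ r) ≤ M

/-- Euclidean inner product on `Fin d → ℝ`. -/
def dot {d : ℕ} (x y : Fin d → ℝ) : ℝ := ∑ i, x i * y i

/-- Matrix-vector multiplication. -/
def mulVec' {d : ℕ} (M : Fin d → Fin d → ℝ) (v : Fin d → ℝ) : Fin d → ℝ :=
  fun i => ∑ j, M i j * v j

/-- `Y` is controlled by `X` with Gubinelli derivative `Y'` (vector case). -/
def Controlled {d : ℕ} (q r a b : ℝ) (X Y : ℝ → Fin d → ℝ)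
    (Y' : ℝ → Fin d → Fin d → ℝ) : Prop :=
  MemVp q a b Y' ∧
    FiniteRVar2 r a b (fun s t => Y t - Y s - mulVec' (Y' s) (X t - X s))

/-- `Y` is controlled by `X` with Gubinelli derivative `Y'` (scalar case). -/
def Controlled1 (q r a b : ℝ) (X Y Y' : ℝ → ℝ) : Prop :=
  MemVp q a b Y' ∧
    FiniteRVar2 r a b (fun s t => Y t - Y s - Y' s * (X t - X s))

/-- A control function on the simplex `Δ_T`. -/
def IsControlFun (T : ℝ) (ω : ℝ → ℝ → ℝ) : Prop :=
  ContinuousOn (fun z : ℝ × ℝ => ω z.1 z.2)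
      {z : ℝ × ℝ | 0 ≤ z.1 ∧ z.1 ≤ z.2 ∧ z.2 ≤ T} ∧
    (∀ s ∈ Set.Icc (0 : ℝ) T, ω s s = 0) ∧
    (∀ s t : ℝ, 0 ≤ s → s ≤ t → t ≤ T → 0 ≤ ω s t) ∧
    (∀ s u t : ℝ, 0 ≤ s → s ≤ u → u ≤ t → t ≤ T → ω s u + ω u t ≤ ω s t)

/-- An increasing (refining) sequence of partitions with mesh tending to zero. -/
def IncreasingSeq {T : ℝ} (π : ℕ → GridPartition 0 T) : Prop :=
  (∀ n, Set.range (π n).t ⊆ Set.range (π (n + 1)).t) ∧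
    Tendsto (fun n => (π n).mesh) atTop (𝓝 0)

/-- `f` has quadratic variation `Q` along the partition sequence `π` in the sense
of Föllmer. -/
def HasQV {T : ℝ} (π : ℕ → GridPartition 0 T) (f : ℝ → ℝ) (Q : ℝ → ℝ) : Prop :=
  ContinuousOn Q (Set.Icc 0 T) ∧
    ∀ u ∈ Set.Icc (0 : ℝ) T,
      Tendsto (fun n => ∑ i : Fin (π n).n,
          (f (min ((π n).t i.succ) u) - f (min ((π n).t i.castSucc) u)) ^ 2)
        atTop (𝓝 (Q u))


namespace FIto

variable {a b : ℝ}

/-- extended grid -/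
def tN (π : GridPartition a b) (i : ℕ) : ℝ := π.t ⟨min i π.n, Nat.lt_succ_of_le (min_le_right _ _)⟩

lemma tN_mono (π : GridPartition a b) : Monotone (tN π) := by
  intro i j hij
  exact π.mono (by simpa [Fin.le_def] using min_le_min_right π.n hij)

lemma tN_zero (π : GridPartition a b) : tN π 0 = a := by
  simpa [tN] using π.first

lemma tN_of_ge (π : GridPartition a b) {i : ℕ} (h : π.n ≤ i) : tN π i = b := by
  have : min i π.n = π.n := min_eq_right h
  simp only [tN, this]
  simpa [Fin.last] using π.last

lemma tN_last (π : GridPartition a b) : tN π π.n = b := tN_of_ge π le_rfl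

lemma tN_mem (π : GridPartition a b) (i : ℕ) : tN π i ∈ Set.Icc a b := by
  constructor
  · calc a = tN π 0 := (tN_zero π).symm
    _ ≤ tN π i := tN_mono π (Nat.zero_le i)
  · calc tN π i ≤ tN π (max π.n i) := tN_mono π (le_max_right _ _)
    _ = b := tN_of_ge π (le_max_left π.n i)

lemma mesh_nonneg (π : GridPartition a b) : 0 ≤ π.mesh := by
  rcases Nat.eq_zero_or_pos π.n with h | h
  · unfold GridPartition.mesh
    haveI : IsEmpty (Fin π.n) := by rw [h]; exact Fin.isEmpty'
    rw [Real.iSup_of_isEmpty]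
  · have i0 : Fin π.n := ⟨0, h⟩
    have h1 : π.t i0.castSucc ≤ π.t i0.succ := π.mono (by simp [Fin.le_def])
    have h2 : π.t i0.succ - π.t i0.castSucc ≤ π.mesh :=
      le_ciSup (f := fun i : Fin π.n => π.t i.succ - π.t i.castSucc)
        (Set.Finite.bddAbove (Set.finite_range _)) i0
    linarith

lemma tN_step_le_mesh (π : GridPartition a b) (i : ℕ) : tN π (i + 1) - tN π i ≤ π.mesh := by
  rcases lt_or_ge i π.n with h | h
  · have key : tN π (i+1) - tN π i = π.t (⟨i, h⟩ : Fin π.n).succ - π.t (⟨i, h⟩ : Fin π.n).castSucc := by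
      have e1 : min (i+1) π.n = i+1 := min_eq_left (Nat.succ_le_of_lt h)
      have e2 : min i π.n = i := min_eq_left h.le
      simp only [tN, e1, e2]
      congr 1
    rw [key]
    exact le_ciSup (f := fun i : Fin π.n => π.t i.succ - π.t i.castSucc)
      (Set.Finite.bddAbove (Set.finite_range _)) _
  · rw [tN_of_ge π h, tN_of_ge π (le_trans h (Nat.le_succ i))]
    simpa using mesh_nonneg π

lemma rsum_eq {E : Type*} [AddCommMonoid E] (π : GridPartition a b) (F : ℝ → ℝ → E) :
    π.rsum F = ∑ i ∈ Finset.range π.n, F (tN π i) (tN π (i + 1)) := by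
  rw [GridPartition.rsum, ← Fin.sum_univ_eq_sum_range (fun i => F (tN π i) (tN π (i+1))) π.n]
  refine Finset.sum_congr rfl (fun i _ => ?_)
  have h1 : tN π i.val = π.t i.castSucc := by
    simp [tN, Fin.castSucc, Fin.castAdd, Fin.castLE, min_eq_left i.isLt.le]
  have h2 : tN π (i.val + 1) = π.t i.succ := by
    simp [tN, Fin.succ, min_eq_left (Nat.succ_le_of_lt i.isLt)]
  rw [h1, h2]

/-- telescoping sum over the whole grid -/
lemma sum_telescope (π : GridPartition a b) (G : ℝ → ℝ) :
    ∑ i ∈ Finset.range π.n, (G (tN π (i + 1)) - G (tN π i)) = G b - G a := by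
  rw [Finset.sum_range_sub (fun i => G (tN π i)) π.n, tN_last, tN_zero]

end FIto

namespace FIto

variable {a b : ℝ}

/-- index of the first occurrence of `σ.tN k` in the grid of `τ` (junk if absent) -/
noncomputable def rho (σ τ : GridPartition a b) (k : ℕ) : ℕ := sInf {i : ℕ | tN τ i = tN σ k}

lemma rho_spec {σ τ : GridPartition a b} (h : Set.range σ.t ⊆ Set.range τ.t) (k : ℕ) :
    tN τ (rho σ τ k) = tN σ k := by
  have : σ.t ⟨min k σ.n, Nat.lt_succ_of_le (min_le_right _ _)⟩ ∈ Set.range τ.t := h ⟨_, rfl⟩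
  obtain ⟨j, hj⟩ := this
  have hne : (Set.Nonempty {i : ℕ | tN τ i = tN σ k}) := by
    refine ⟨j.val, ?_⟩
    simp only [Set.mem_setOf_eq, tN, min_eq_left (Nat.lt_succ_iff.mp j.isLt)]
    rw [← hj]
  exact Nat.sInf_mem hne

lemma rho_min {σ τ : GridPartition a b} (k i : ℕ) (hi : tN τ i = tN σ k) : rho σ τ k ≤ i :=
  Nat.sInf_le hi

lemma rho_zero {σ τ : GridPartition a b} : rho σ τ 0 = 0 :=
  Nat.le_zero.mp (rho_min 0 0 (by rw [tN_zero, tN_zero]))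

lemma rho_mono {σ τ : GridPartition a b} (h : Set.range σ.t ⊆ Set.range τ.t) :
    Monotone (rho σ τ) := by
  intro k k' hk
  rcases eq_or_lt_of_le (tN_mono σ hk) with he | hlt
  · exact rho_min k (rho σ τ k') (by rw [rho_spec h k', he])
  · by_contra hc
    push_neg at hc
    have := tN_mono τ hc.le
    rw [rho_spec h, rho_spec h] at this
    exact absurd this (not_le.mpr hlt)

lemma rho_last_le {σ τ : GridPartition a b} : rho σ τ σ.n ≤ τ.n :=
  rho_min σ.n τ.n (by rw [tN_last, tN_last])

lemma tN_eq_b_of_rho_le {σ τ : GridPartition a b} (h : Set.range σ.t ⊆ Set.range τ.t)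
    {i : ℕ} (hi : rho σ τ σ.n ≤ i) : tN τ i = b := by
  have h1 : b ≤ tN τ i := by
    calc b = tN τ (rho σ τ σ.n) := by rw [rho_spec h σ.n, tN_last]
    _ ≤ tN τ i := tN_mono τ hi
  exact le_antisymm (tN_mem τ i).2 h1

/-- generic block decomposition of a sum -/
lemma sum_blocks {M : Type*} [AddCommMonoid M] (ρ : ℕ → ℕ) (hmono : Monotone ρ)
    (w : ℕ → M) (K : ℕ) :
    ∑ k ∈ Finset.range K, ∑ i ∈ Finset.Ico (ρ k) (ρ (k + 1)), w i
      = ∑ i ∈ Finset.Ico (ρ 0) (ρ K), w i := by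
  induction K with
  | zero => simp
  | succ K ih =>
      rw [Finset.sum_range_succ, ih,
        Finset.sum_Ico_consecutive _ (hmono (Nat.zero_le K)) (hmono (Nat.le_succ K))]

/-- KEY comparison: fine weighted sum vs coarse-block weighted sum -/
lemma key_compare (ρ : ℕ → ℕ) (hmono : Monotone ρ) (hρ0 : ρ 0 = 0) (K N : ℕ)
    (hρK : ρ K ≤ N) (g c w : ℕ → ℝ) (ε V : ℝ) (hε : 0 ≤ ε)
    (hclose : ∀ k < K, ∀ i ∈ Finset.Ico (ρ k) (ρ (k + 1)), |g i - c k| ≤ ε)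
    (htail : ∀ i, ρ K ≤ i → i < N → w i = 0)
    (hV : ∑ i ∈ Finset.range N, |w i| ≤ V) :
    |∑ i ∈ Finset.range N, g i * w i
      - ∑ k ∈ Finset.range K, c k * ∑ i ∈ Finset.Ico (ρ k) (ρ (k + 1)), w i| ≤ ε * V := by
  have hsplit : ∑ i ∈ Finset.range N, g i * w i
      = ∑ i ∈ Finset.Ico (ρ 0) (ρ K), g i * w i := by
    rw [hρ0]
    rw [Finset.range_eq_Ico, ← Finset.sum_Ico_consecutive _ (Nat.zero_le (ρ K)) hρK]
    have : ∑ i ∈ Finset.Ico (ρ K) N, g i * w i = 0 := by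
      refine Finset.sum_eq_zero (fun i hi => ?_)
      rw [Finset.mem_Ico] at hi
      rw [htail i hi.1 hi.2, mul_zero]
    rw [this, add_zero]
  rw [hsplit, ← sum_blocks ρ hmono (fun i => g i * w i) K]
  have hc : ∀ k ∈ Finset.range K, c k * ∑ i ∈ Finset.Ico (ρ k) (ρ (k+1)), w i
      = ∑ i ∈ Finset.Ico (ρ k) (ρ (k+1)), c k * w i := fun k _ => Finset.mul_sum _ _ _
  rw [Finset.sum_congr rfl hc, ← Finset.sum_sub_distrib]
  calc |∑ k ∈ Finset.range K, (∑ i ∈ Finset.Ico (ρ k) (ρ (k+1)), g i * w i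
          - ∑ i ∈ Finset.Ico (ρ k) (ρ (k+1)), c k * w i)|
      ≤ ∑ k ∈ Finset.range K, |∑ i ∈ Finset.Ico (ρ k) (ρ (k+1)), (g i * w i - c k * w i)| := by
        refine (Finset.abs_sum_le_sum_abs _ _).trans_eq ?_
        refine Finset.sum_congr rfl (fun k _ => ?_)
        rw [Finset.sum_sub_distrib]
    _ ≤ ∑ k ∈ Finset.range K, ∑ i ∈ Finset.Ico (ρ k) (ρ (k+1)), ε * |w i| := by
        refine Finset.sum_le_sum (fun k hk => ?_)
        refine (Finset.abs_sum_le_sum_abs _ _).trans ?_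
        refine Finset.sum_le_sum (fun i hi => ?_)
        rw [← sub_mul, abs_mul]
        exact mul_le_mul_of_nonneg_right
          (hclose k (Finset.mem_range.mp hk) i hi) (abs_nonneg _)
    _ = ε * ∑ i ∈ Finset.Ico (ρ 0) (ρ K), |w i| := by
        rw [sum_blocks ρ hmono (fun i => ε * |w i|) K, Finset.mul_sum]
    _ ≤ ε * V := by
        refine mul_le_mul_of_nonneg_left ?_ hε
        refine le_trans ?_ hV
        rw [hρ0, Finset.range_eq_Ico]
        exact Finset.sum_le_sum_of_subset_of_nonneg
          (Finset.Ico_subset_Ico le_rfl hρK) (fun i _ _ => abs_nonneg _)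

end FIto

namespace FIto

variable {T : ℝ}

lemma rho_le {σ τ : GridPartition 0 T} (h : Set.range σ.t ⊆ Set.range τ.t) (k : ℕ) :
    rho σ τ k ≤ τ.n := by
  have : σ.t ⟨min k σ.n, Nat.lt_succ_of_le (min_le_right _ _)⟩ ∈ Set.range τ.t := h ⟨_, rfl⟩
  obtain ⟨j, hj⟩ := this
  have : rho σ τ k ≤ j.val := by
    refine rho_min k j.val ?_
    simp only [tN, min_eq_left (Nat.lt_succ_iff.mp j.isLt)]
    rw [← hj]
  exact this.trans (Nat.lt_succ_iff.mp j.isLt)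

lemma range_subset_of_le {π : ℕ → GridPartition 0 T} (hπ : IncreasingSeq π) {m r : ℕ}
    (h : m ≤ r) : Set.range (π m).t ⊆ Set.range (π r).t := by
  induction r with
  | zero => cases Nat.le_zero.mp h; exact subset_rfl
  | succ r ih =>
      rcases (by omega : m ≤ r ∨ m = r + 1) with h' | h'
      · exact (ih h').trans (hπ.1 r)
      · cases h'; exact subset_rfl

/-- truncated QV sum at a grid point equals the plain sum up to that index -/
lemma qv_trunc (σ : GridPartition 0 T) (f : ℝ → ℝ) {a : ℕ} (ha : a ≤ σ.n) :
    (∑ i : Fin σ.n, (f (min (σ.t i.succ) (tN σ a)) - f (min (σ.t i.castSucc) (tN σ a))) ^ 2)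
      = ∑ i ∈ Finset.range a, (f (tN σ (i + 1)) - f (tN σ i)) ^ 2 := by
  have h0 : (∑ i : Fin σ.n, (f (min (σ.t i.succ) (tN σ a)) - f (min (σ.t i.castSucc) (tN σ a))) ^ 2)
      = σ.rsum (fun s t => (f (min t (tN σ a)) - f (min s (tN σ a))) ^ 2) := rfl
  rw [h0, rsum_eq]
  rw [Finset.range_eq_Ico, ← Finset.sum_Ico_consecutive _ (Nat.zero_le a) ha,
    ← Finset.range_eq_Ico]
  have h1 : ∑ i ∈ Finset.Ico a σ.n,
      (f (min (tN σ (i+1)) (tN σ a)) - f (min (tN σ i) (tN σ a))) ^ 2 = 0 := by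
    refine Finset.sum_eq_zero (fun i hi => ?_)
    rw [Finset.mem_Ico] at hi
    rw [min_eq_right (tN_mono σ hi.1), min_eq_right (tN_mono σ (hi.1.trans (Nat.le_succ i)))]
    ring
  have h2 : ∑ i ∈ Finset.range a,
      (f (min (tN σ (i+1)) (tN σ a)) - f (min (tN σ i) (tN σ a))) ^ 2
      = ∑ i ∈ Finset.range a, (f (tN σ (i + 1)) - f (tN σ i)) ^ 2 := by
    refine Finset.sum_congr rfl (fun i hi => ?_)
    rw [Finset.mem_range] at hi
    have e1 : min (tN σ (i + 1)) (tN σ a) = tN σ (i + 1) :=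
      min_eq_left (tN_mono σ (Nat.succ_le_of_lt hi))
    have e2 : min (tN σ i) (tN σ a) = tN σ i := min_eq_left (tN_mono σ hi.le)
    rw [e1, e2]
  rw [h1, add_zero, h2]

variable {π : ℕ → GridPartition 0 T} {f Q : ℝ → ℝ}

/-- QV convergence at a grid point of `π m`, written as range sums over refining grids -/
lemma qv_at_grid (hπ : IncreasingSeq π) (hf : HasQV π f Q) (m a : ℕ) :
    Tendsto (fun r => ∑ i ∈ Finset.range (rho (π m) (π r) a),
        (f (tN (π r) (i + 1)) - f (tN (π r) i)) ^ 2) atTop (𝓝 (Q (tN (π m) a))) := by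
  have hu : tN (π m) a ∈ Set.Icc 0 T := tN_mem (π m) a
  refine (hf.2 _ hu).congr' ?_
  filter_upwards [eventually_ge_atTop m] with r hr
  have hsub := range_subset_of_le hπ hr
  have hspec : tN (π r) (rho (π m) (π r) a) = tN (π m) a := rho_spec hsub a
  rw [← hspec]
  exact qv_trunc (π r) f (rho_le hsub a)

end FIto


namespace FIto

variable {T : ℝ} {π : ℕ → GridPartition 0 T}

/-- increments of a function along the grid of a partition -/
def inc (σ : GridPartition 0 T) (f : ℝ → ℝ) (i : ℕ) : ℝ := f (tN σ (i + 1)) - f (tN σ i)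

lemma block_prod_tendsto (hπ : IncreasingSeq π) {f g : ℝ → ℝ} {Qf Qg Qs : ℝ → ℝ}
    (hf : HasQV π f Qf) (hg : HasQV π g Qg) (hs : HasQV π (fun t => f t + g t) Qs)
    (m k : ℕ) :
    Tendsto (fun r => ∑ i ∈ Finset.Ico (rho (π m) (π r) k) (rho (π m) (π r) (k + 1)),
        inc (π r) f i * inc (π r) g i) atTop
      (𝓝 ((Qs (tN (π m) (k+1)) - Qf (tN (π m) (k+1)) - Qg (tN (π m) (k+1))) / 2
        - (Qs (tN (π m) k) - Qf (tN (π m) k) - Qg (tN (π m) k)) / 2)) := by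
  have Lf1 := qv_at_grid hπ hf m (k+1)
  have Lf0 := qv_at_grid hπ hf m k
  have Lg1 := qv_at_grid hπ hg m (k+1)
  have Lg0 := qv_at_grid hπ hg m k
  have Ls1 := qv_at_grid hπ hs m (k+1)
  have Ls0 := qv_at_grid hπ hs m k
  have hcomb := ((((Ls1.sub Ls0).sub (Lf1.sub Lf0)).sub (Lg1.sub Lg0)).div_const 2)
  have heq : (fun r => ((((∑ i ∈ Finset.range (rho (π m) (π r) (k+1)),
        ((fun t => f t + g t) (tN (π r) (i + 1)) - (fun t => f t + g t) (tN (π r) i)) ^ 2)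
      - ∑ i ∈ Finset.range (rho (π m) (π r) k),
        ((fun t => f t + g t) (tN (π r) (i + 1)) - (fun t => f t + g t) (tN (π r) i)) ^ 2)
      - ((∑ i ∈ Finset.range (rho (π m) (π r) (k+1)),
          (f (tN (π r) (i + 1)) - f (tN (π r) i)) ^ 2)
        - ∑ i ∈ Finset.range (rho (π m) (π r) k),
          (f (tN (π r) (i + 1)) - f (tN (π r) i)) ^ 2))
      - ((∑ i ∈ Finset.range (rho (π m) (π r) (k+1)),
          (g (tN (π r) (i + 1)) - g (tN (π r) i)) ^ 2)
        - ∑ i ∈ Finset.range (rho (π m) (π r) k),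
          (g (tN (π r) (i + 1)) - g (tN (π r) i)) ^ 2)) / 2)
      =ᶠ[atTop] (fun r => ∑ i ∈ Finset.Ico (rho (π m) (π r) k) (rho (π m) (π r) (k + 1)),
        inc (π r) f i * inc (π r) g i) := by
    filter_upwards [eventually_ge_atTop m] with r hr
    have hsub := range_subset_of_le hπ hr
    have hmono : rho (π m) (π r) k ≤ rho (π m) (π r) (k+1) :=
      rho_mono hsub (Nat.le_succ k)
    rw [← Finset.sum_Ico_eq_sub _ hmono, ← Finset.sum_Ico_eq_sub _ hmono,
      ← Finset.sum_Ico_eq_sub _ hmono]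
    rw [← Finset.sum_sub_distrib, ← Finset.sum_sub_distrib, Finset.sum_div]
    refine Finset.sum_congr rfl (fun i _ => ?_)
    simp only [inc]
    ring
  have : ((Qs (tN (π m) (k+1)) - Qs (tN (π m) k))
      - (Qf (tN (π m) (k+1)) - Qf (tN (π m) k))
      - (Qg (tN (π m) (k+1)) - Qg (tN (π m) k))) / 2
      = (Qs (tN (π m) (k+1)) - Qf (tN (π m) (k+1)) - Qg (tN (π m) (k+1))) / 2
        - (Qs (tN (π m) k) - Qf (tN (π m) k) - Qg (tN (π m) k)) / 2 := by ring
  rw [← this]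
  exact hcomb.congr' heq

/-- The full increment-square sums are uniformly bounded. -/
lemma sum_sq_bound (hT : 0 ≤ T) {f Q : ℝ → ℝ} (hf : HasQV π f Q) :
    ∃ M : ℝ, 0 ≤ M ∧ ∀ r, ∑ i ∈ Finset.range (π r).n, inc (π r) f i ^ 2 ≤ M := by
  have h1 : Tendsto (fun r => ∑ i ∈ Finset.range (π r).n, inc (π r) f i ^ 2)
      atTop (𝓝 (Q T)) := by
    refine (hf.2 T ⟨hT, le_rfl⟩).congr (fun r => ?_)
    have := qv_trunc (π r) f (a := (π r).n) le_rfl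
    rw [tN_last] at this
    exact this
  obtain ⟨M, hM⟩ := h1.bddAbove_range
  refine ⟨max M 0, le_max_right _ _, fun r => ?_⟩
  exact le_trans (hM ⟨r, rfl⟩) (le_max_left _ _)

/-- Cauchy–Schwarz bound for sums of increment products. -/
lemma sum_prod_abs_le {f g : ℝ → ℝ} {Mf Mg : ℝ} (hMf : 0 ≤ Mf) (hMg : 0 ≤ Mg) (r : ℕ)
    (hf : ∑ i ∈ Finset.range (π r).n, inc (π r) f i ^ 2 ≤ Mf)
    (hg : ∑ i ∈ Finset.range (π r).n, inc (π r) g i ^ 2 ≤ Mg) :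
    ∑ i ∈ Finset.range (π r).n, |inc (π r) f i * inc (π r) g i| ≤ Real.sqrt (Mf * Mg) := by
  set s := ∑ i ∈ Finset.range (π r).n, |inc (π r) f i * inc (π r) g i| with hs
  have hs0 : 0 ≤ s := Finset.sum_nonneg (fun i _ => abs_nonneg _)
  rw [Real.le_sqrt hs0 (mul_nonneg hMf hMg)]
  have key : s ^ 2 ≤ (∑ i ∈ Finset.range (π r).n, |inc (π r) f i| ^ 2)
      * ∑ i ∈ Finset.range (π r).n, |inc (π r) g i| ^ 2 := by
    have : s = ∑ i ∈ Finset.range (π r).n, |inc (π r) f i| * |inc (π r) g i| := by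
      rw [hs]; exact Finset.sum_congr rfl (fun i _ => abs_mul _ _)
    rw [this]
    exact Finset.sum_mul_sq_le_sq_mul_sq _ _ _
  refine key.trans (mul_le_mul ?_ ?_ (Finset.sum_nonneg (fun i _ => sq_nonneg _)) hMf)
  · simpa [sq_abs] using hf
  · simpa [sq_abs] using hg

end FIto

namespace FIto

variable {T : ℝ} {π : ℕ → GridPartition 0 T}

/-- Stieltjes-type Riemann sum along `π n`. -/
def Sseq (π : ℕ → GridPartition 0 T) (h B : ℝ → ℝ) (n : ℕ) : ℝ :=
  ∑ i ∈ Finset.range (π n).n, h (tN (π n) i) * (B (tN (π n) (i + 1)) - B (tN (π n) i))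

/-- Weighted discrete-covariation sum along `π n`. -/
def Thseq (π : ℕ → GridPartition 0 T) (h f g : ℝ → ℝ) (n : ℕ) : ℝ :=
  ∑ i ∈ Finset.range (π n).n, h (tN (π n) i) * (inc (π n) f i * inc (π n) g i)

section pair

variable {f g : ℝ → ℝ} {Qf Qg Qs : ℝ → ℝ}

/-- the candidate bracket -/
noncomputable def Bfun (Qf Qg Qs : ℝ → ℝ) (u : ℝ) : ℝ := (Qs u - Qf u - Qg u) / 2

lemma block_B_tendsto (hπ : IncreasingSeq π) (hf : HasQV π f Qf) (hg : HasQV π g Qg)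
    (hs : HasQV π (fun t => f t + g t) Qs) (m k : ℕ) :
    Tendsto (fun r => ∑ i ∈ Finset.Ico (rho (π m) (π r) k) (rho (π m) (π r) (k + 1)),
        inc (π r) f i * inc (π r) g i) atTop
      (𝓝 (Bfun Qf Qg Qs (tN (π m) (k + 1)) - Bfun Qf Qg Qs (tN (π m) k))) :=
  block_prod_tendsto hπ hf hg hs m k

/-- uniform bound for sums |ΔB| over the grids, and for increment-product sums -/
lemma exists_V (hT : 0 ≤ T) (hπ : IncreasingSeq π) (hf : HasQV π f Qf) (hg : HasQV π g Qg)
    (hs : HasQV π (fun t => f t + g t) Qs) : ∃ V : ℝ, 0 ≤ V ∧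
    (∀ r, ∑ i ∈ Finset.range (π r).n, |inc (π r) f i * inc (π r) g i| ≤ V) ∧
    (∀ m, ∑ k ∈ Finset.range (π m).n,
      |Bfun Qf Qg Qs (tN (π m) (k + 1)) - Bfun Qf Qg Qs (tN (π m) k)| ≤ V) := by
  obtain ⟨Mf, hMf0, hMf⟩ := sum_sq_bound hT hf
  obtain ⟨Mg, hMg0, hMg⟩ := sum_sq_bound hT hg
  refine ⟨Real.sqrt (Mf * Mg), Real.sqrt_nonneg _, fun r => ?_, fun m => ?_⟩
  · exact sum_prod_abs_le hMf0 hMg0 r (hMf r) (hMg r)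
  · -- each |ΔB| is a limit of block sums
    have hlim : Tendsto (fun r => ∑ k ∈ Finset.range (π m).n,
        |∑ i ∈ Finset.Ico (rho (π m) (π r) k) (rho (π m) (π r) (k + 1)),
          inc (π r) f i * inc (π r) g i|) atTop
        (𝓝 (∑ k ∈ Finset.range (π m).n,
          |Bfun Qf Qg Qs (tN (π m) (k + 1)) - Bfun Qf Qg Qs (tN (π m) k)|)) := by
      refine tendsto_finset_sum _ (fun k _ => ?_)
      exact (block_B_tendsto hπ hf hg hs m k).abs
    refine le_of_tendsto hlim ?_
    filter_upwards [eventually_ge_atTop m] with r hr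
    have hsub := range_subset_of_le hπ hr
    have hmono := rho_mono hsub
    calc ∑ k ∈ Finset.range (π m).n, |∑ i ∈ Finset.Ico (rho (π m) (π r) k)
            (rho (π m) (π r) (k + 1)), inc (π r) f i * inc (π r) g i|
        ≤ ∑ k ∈ Finset.range (π m).n, ∑ i ∈ Finset.Ico (rho (π m) (π r) k)
            (rho (π m) (π r) (k + 1)), |inc (π r) f i * inc (π r) g i| := by
          exact Finset.sum_le_sum (fun k _ => Finset.abs_sum_le_sum_abs _ _)
      _ = ∑ i ∈ Finset.Ico (rho (π m) (π r) 0) (rho (π m) (π r) (π m).n),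
            |inc (π r) f i * inc (π r) g i| :=
          sum_blocks _ hmono _ _
      _ ≤ ∑ i ∈ Finset.range (π r).n, |inc (π r) f i * inc (π r) g i| := by
          rw [rho_zero, Finset.range_eq_Ico]
          exact Finset.sum_le_sum_of_subset_of_nonneg
            (Finset.Ico_subset_Ico (Nat.zero_le _) (rho_le hsub _))
            (fun i _ _ => abs_nonneg _)
      _ ≤ Real.sqrt (Mf * Mg) := sum_prod_abs_le hMf0 hMg0 r (hMf r) (hMg r)

/-- fine Stieltjes sum vs coarse Stieltjes sum -/
lemma S_diff_le (hπ : IncreasingSeq π) {h : ℝ → ℝ} {m r : ℕ} (hmr : m ≤ r) {ε V : ℝ} (hε : 0 ≤ ε)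
    (hVb : ∀ m', ∑ k ∈ Finset.range (π m').n,
      |Bfun Qf Qg Qs (tN (π m') (k + 1)) - Bfun Qf Qg Qs (tN (π m') k)| ≤ V)
    (hclose : ∀ x ∈ Set.Icc (0:ℝ) T, ∀ y ∈ Set.Icc (0:ℝ) T,
      |x - y| ≤ (π m).mesh → |h x - h y| ≤ ε) :
    |Sseq π h (Bfun Qf Qg Qs) r - Sseq π h (Bfun Qf Qg Qs) m| ≤ ε * V := by
  classical
  set B := Bfun Qf Qg Qs
  have hsub := range_subset_of_le hπ hmr
  set ρ := rho (π m) (π r) with hρ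
  have hcoarse : Sseq π h B m = ∑ k ∈ Finset.range (π m).n,
      h (tN (π m) k) * ∑ i ∈ Finset.Ico (ρ k) (ρ (k + 1)),
        (B (tN (π r) (i + 1)) - B (tN (π r) i)) := by
    refine Finset.sum_congr rfl (fun k _ => ?_)
    congr 1
    have htel : ∑ i ∈ Finset.Ico (ρ k) (ρ (k + 1)),
        (B (tN (π r) (i + 1)) - B (tN (π r) i))
        = B (tN (π r) (ρ (k+1))) - B (tN (π r) (ρ k)) := by
      rw [Finset.sum_Ico_eq_sub _ (rho_mono hsub (Nat.le_succ k)),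
        Finset.sum_range_sub (fun i => B (tN (π r) i)),
        Finset.sum_range_sub (fun i => B (tN (π r) i))]
      ring
    rw [htel, rho_spec hsub, rho_spec hsub]
  rw [hcoarse]
  refine key_compare ρ (rho_mono hsub) rho_zero (π m).n (π r).n (rho_le hsub _)
    (fun i => h (tN (π r) i)) (fun k => h (tN (π m) k))
    (fun i => B (tN (π r) (i + 1)) - B (tN (π r) i)) ε V hε ?_ ?_ (hVb r)
  · intro k hk i hi
    rw [Finset.mem_Ico] at hi
    have h1 : tN (π m) k ≤ tN (π r) i := by
      rw [← rho_spec hsub k]; exact tN_mono (π r) hi.1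
    have h2 : tN (π r) i ≤ tN (π m) (k + 1) := by
      rw [← rho_spec hsub (k+1)]; exact tN_mono (π r) hi.2.le
    have h3 : |tN (π r) i - tN (π m) k| ≤ (π m).mesh := by
      rw [abs_of_nonneg (by linarith)]
      have := tN_step_le_mesh (π m) k
      linarith
    exact hclose _ (tN_mem _ _) _ (tN_mem _ _) h3
  · intro i hi1 hi2
    have e1 : tN (π r) i = T := tN_eq_b_of_rho_le hsub hi1
    have e2 : tN (π r) (i + 1) = T := tN_eq_b_of_rho_le hsub (hi1.trans (Nat.le_succ i))
    show B (tN (π r) (i + 1)) - B (tN (π r) i) = 0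
    rw [e1, e2, sub_self]

end pair

end FIto

namespace FIto

variable {T : ℝ} {π : ℕ → GridPartition 0 T} {f g : ℝ → ℝ} {Qf Qg Qs : ℝ → ℝ}

lemma main_pair (hT : 0 < T) (hπ : IncreasingSeq π) (hf : HasQV π f Qf)
    (hg : HasQV π g Qg) (hs : HasQV π (fun t => f t + g t) Qs)
    (h : ℝ → ℝ) (hh : ContinuousOn h (Set.Icc 0 T)) :
    ∃ L : ℝ, Tendsto (Sseq π h (Bfun Qf Qg Qs)) atTop (𝓝 L) ∧
      Tendsto (Thseq π h f g) atTop (𝓝 L) := by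
  classical
  obtain ⟨V, hV0, hV1, hV2⟩ := exists_V hT.le hπ hf hg hs
  have huc := isCompact_Icc.uniformContinuousOn_of_continuous hh
  rw [Metric.uniformContinuousOn_iff] at huc
  have hclose_of : ∀ {m : ℕ} {δ ε' : ℝ}, 0 < ε' → (π m).mesh < δ →
      (∀ x ∈ Set.Icc (0:ℝ) T, ∀ y ∈ Set.Icc (0:ℝ) T, dist x y < δ → dist (h x) (h y) < ε') →
      (∀ x ∈ Set.Icc (0:ℝ) T, ∀ y ∈ Set.Icc (0:ℝ) T, |x - y| ≤ (π m).mesh → |h x - h y| ≤ ε') := by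
    intro m δ ε' hε' hmesh hδ2 x hx y hy hxy
    have : dist x y < δ := by
      rw [Real.dist_eq]; exact lt_of_le_of_lt hxy hmesh
    have := hδ2 x hx y hy this
    rw [Real.dist_eq] at this
    exact this.le
  -- Step A : Cauchy
  have hcauchy : CauchySeq (Sseq π h (Bfun Qf Qg Qs)) := by
    rw [Metric.cauchySeq_iff']
    intro ε hε
    have hV1' : (0:ℝ) < V + 1 := by linarith
    have hε' : 0 < ε / (V + 1) := div_pos hε hV1'
    obtain ⟨δ, hδ, hδ2⟩ := huc _ hε'
    obtain ⟨N, hN⟩ := (hπ.2.eventually_lt_const hδ).exists_forall_of_atTop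
    refine ⟨N, fun n hn => ?_⟩
    rw [Real.dist_eq]
    have hb := S_diff_le (Qf := Qf) (Qg := Qg) (Qs := Qs) hπ (h := h) hn hε'.le hV2
      (hclose_of hε' (hN N le_rfl) hδ2)
    refine lt_of_le_of_lt hb ?_
    calc ε / (V + 1) * V < ε / (V + 1) * (V + 1) := by
          exact mul_lt_mul_of_pos_left (by linarith) hε'
      _ = ε := div_mul_cancel₀ ε (by linarith)
  set L := limUnder atTop (Sseq π h (Bfun Qf Qg Qs)) with hL
  have hSL : Tendsto (Sseq π h (Bfun Qf Qg Qs)) atTop (𝓝 L) := hcauchy.tendsto_limUnder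
  refine ⟨L, hSL, ?_⟩
  -- Step B : Thseq - Sseq → 0
  have hdiff : Tendsto (fun n => Thseq π h f g n - Sseq π h (Bfun Qf Qg Qs) n) atTop (𝓝 0) := by
    rw [Metric.tendsto_atTop]
    intro ε hε
    have h2V : (0:ℝ) < 2 * V + 2 := by linarith
    have hε' : 0 < ε / (2 * V + 2) := div_pos hε h2V
    obtain ⟨δ, hδ, hδ2⟩ := huc _ hε'
    obtain ⟨m, hm⟩ := (hπ.2.eventually_lt_const hδ).exists
    have hclose := hclose_of hε' hm hδ2
    -- C r := coarse-fine mixed sum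
    set C : ℕ → ℝ := fun r => ∑ k ∈ Finset.range (π m).n, h (tN (π m) k) *
      ∑ i ∈ Finset.Ico (rho (π m) (π r) k) (rho (π m) (π r) (k + 1)),
        inc (π r) f i * inc (π r) g i with hC
    have hCt : Tendsto C atTop (𝓝 (Sseq π h (Bfun Qf Qg Qs) m)) := by
      refine tendsto_finset_sum _ (fun k _ => ?_)
      exact (block_B_tendsto hπ hf hg hs m k).const_mul _
    have hCev := (Metric.tendsto_atTop.mp hCt) _ hε'
    obtain ⟨r₀, hr₀⟩ := hCev
    refine ⟨max m r₀, fun r hr => ?_⟩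
    have hrm : m ≤ r := le_trans (le_max_left _ _) hr
    have hrr₀ : r₀ ≤ r := le_trans (le_max_right _ _) hr
    have hsub := range_subset_of_le hπ hrm
    -- |Θ r − C r| ≤ ε' V
    have e1 : |Thseq π h f g r - C r| ≤ ε / (2 * V + 2) * V := by
      refine key_compare (rho (π m) (π r)) (rho_mono hsub) rho_zero (π m).n (π r).n
        (rho_le hsub _) (fun i => h (tN (π r) i)) (fun k => h (tN (π m) k))
        (fun i => inc (π r) f i * inc (π r) g i) _ V hε'.le ?_ ?_ (hV1 r)
      · intro k hk i hi
        rw [Finset.mem_Ico] at hi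
        have h1 : tN (π m) k ≤ tN (π r) i := by
          rw [← rho_spec hsub k]; exact tN_mono (π r) hi.1
        have h2 : tN (π r) i ≤ tN (π m) (k + 1) := by
          rw [← rho_spec hsub (k+1)]; exact tN_mono (π r) hi.2.le
        have h3 : |tN (π r) i - tN (π m) k| ≤ (π m).mesh := by
          rw [abs_of_nonneg (by linarith)]
          have := tN_step_le_mesh (π m) k
          linarith
        exact hclose _ (tN_mem _ _) _ (tN_mem _ _) h3
      · intro i hi1 hi2
        have e1 : tN (π r) i = T := tN_eq_b_of_rho_le hsub hi1
        have e2 : tN (π r) (i + 1) = T := tN_eq_b_of_rho_le hsub (hi1.trans (Nat.le_succ i))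
        show inc (π r) f i * inc (π r) g i = 0
        rw [inc, e1, e2, sub_self, zero_mul]
    have e2 : |C r - Sseq π h (Bfun Qf Qg Qs) m| < ε / (2 * V + 2) := by
      have := hr₀ r hrr₀
      rwa [Real.dist_eq] at this
    have e3 : |Sseq π h (Bfun Qf Qg Qs) r - Sseq π h (Bfun Qf Qg Qs) m|
        ≤ ε / (2 * V + 2) * V := S_diff_le hπ hrm hε'.le hV2 hclose
    rw [Real.dist_eq, sub_zero]
    have habs : |Thseq π h f g r - Sseq π h (Bfun Qf Qg Qs) r|
        ≤ |Thseq π h f g r - C r| + |C r - Sseq π h (Bfun Qf Qg Qs) m|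
          + |Sseq π h (Bfun Qf Qg Qs) r - Sseq π h (Bfun Qf Qg Qs) m| := by
      have t1 := abs_sub_le (Thseq π h f g r) (C r) (Sseq π h (Bfun Qf Qg Qs) m)
      have t2 := abs_sub_le (Thseq π h f g r) (Sseq π h (Bfun Qf Qg Qs) m)
        (Sseq π h (Bfun Qf Qg Qs) r)
      have t3 : |Sseq π h (Bfun Qf Qg Qs) m - Sseq π h (Bfun Qf Qg Qs) r|
          = |Sseq π h (Bfun Qf Qg Qs) r - Sseq π h (Bfun Qf Qg Qs) m| := abs_sub_comm _ _
      linarith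
    have : ε / (2 * V + 2) * V + ε / (2 * V + 2) + ε / (2 * V + 2) * V < ε := by
      have : ε / (2 * V + 2) * (2 * V + 2) = ε := div_mul_cancel₀ ε (by linarith)
      nlinarith
    linarith
  have := hdiff.add hSL
  rw [zero_add] at this
  refine this.congr (fun n => by ring)

end FIto

namespace FIto

section calc1

variable {E : Type*} [NormedAddCommGroup E] [NormedSpace ℝ E]

/-- transfer of the Hölder hypothesis to the second-derivative bilinear form -/
lemma holder_transfer {F : E → ℝ} {C α : ℝ}
    (hH : ∀ x y : E, ‖iteratedFDeriv ℝ 2 F x - iteratedFDeriv ℝ 2 F y‖ ≤ C * ‖x - y‖ ^ α) :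
    ∀ x y : E, ∀ v w : E, |fderiv ℝ (fderiv ℝ F) x v w - fderiv ℝ (fderiv ℝ F) y v w|
      ≤ (max C 0) * ‖x - y‖ ^ α * ‖v‖ * ‖w‖ := by
  intro x y v w
  have h1 : fderiv ℝ (fderiv ℝ F) x v w - fderiv ℝ (fderiv ℝ F) y v w
      = (iteratedFDeriv ℝ 2 F x - iteratedFDeriv ℝ 2 F y) ![v, w] := by
    rw [ContinuousMultilinearMap.sub_apply, iteratedFDeriv_two_apply, iteratedFDeriv_two_apply]
    simp
  rw [h1, ← Real.norm_eq_abs]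
  calc ‖(iteratedFDeriv ℝ 2 F x - iteratedFDeriv ℝ 2 F y) ![v, w]‖
      ≤ ‖iteratedFDeriv ℝ 2 F x - iteratedFDeriv ℝ 2 F y‖ * ∏ i, ‖(![v, w]) i‖ :=
        ContinuousMultilinearMap.le_opNorm _ _
    _ = ‖iteratedFDeriv ℝ 2 F x - iteratedFDeriv ℝ 2 F y‖ * (‖v‖ * ‖w‖) := by
        rw [Fin.prod_univ_two]; simp
    _ ≤ (max C 0) * ‖x - y‖ ^ α * (‖v‖ * ‖w‖) := by
        refine mul_le_mul_of_nonneg_right ?_ (by positivity)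
        refine (hH x y).trans ?_
        exact mul_le_mul_of_nonneg_right (le_max_left _ _) (Real.rpow_nonneg (norm_nonneg _) _)
    _ = (max C 0) * ‖x - y‖ ^ α * ‖v‖ * ‖w‖ := by ring

/-- second-order Taylor estimates with Hölder second derivative -/
lemma taylor_est {F : E → ℝ} (hF : ContDiff ℝ 2 F) {C α : ℝ} (hC : 0 ≤ C) (hα : 0 < α)
    (hH : ∀ x y : E, ∀ v w : E, |fderiv ℝ (fderiv ℝ F) x v w - fderiv ℝ (fderiv ℝ F) y v w|
      ≤ C * ‖x - y‖ ^ α * ‖v‖ * ‖w‖) (x Δ : E) :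
    |F (x + Δ) - F x - fderiv ℝ F x Δ - fderiv ℝ (fderiv ℝ F) x Δ Δ / 2|
        ≤ C * ‖Δ‖ ^ α * ‖Δ‖ * ‖Δ‖ ∧
      |fderiv ℝ F (x + Δ) Δ - fderiv ℝ F x Δ - fderiv ℝ (fderiv ℝ F) x Δ Δ|
        ≤ C * ‖Δ‖ ^ α * ‖Δ‖ * ‖Δ‖ := by
  have hdF : Differentiable ℝ F := hF.differentiable (by norm_num)
  have hdf : Differentiable ℝ (fderiv ℝ F) :=
    (hF.fderiv_right (by norm_num : (1:WithTop ℕ∞) + 1 ≤ 2)).differentiable one_ne_zero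
  set c : ℝ → E := fun θ => x + θ • Δ with hc
  have hcd : ∀ θ : ℝ, HasDerivAt c Δ θ := by
    intro θ
    have := ((hasDerivAt_id θ).smul_const Δ).const_add x
    simpa [hc] using this
  have hc0 : c 0 = x := by simp [hc]
  have hc1 : c 1 = x + Δ := by simp [hc]
  set K := fderiv ℝ (fderiv ℝ F) x Δ Δ with hK
  set M := C * ‖Δ‖ ^ α * ‖Δ‖ * ‖Δ‖ with hM
  have hM0 : 0 ≤ M := by positivity
  have hg1 : ∀ θ : ℝ, HasDerivAt (fun θ => fderiv ℝ F (c θ) Δ)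
      (fderiv ℝ (fderiv ℝ F) (c θ) Δ Δ) θ := by
    intro θ
    have h1 : HasDerivAt (fun θ => fderiv ℝ F (c θ)) (fderiv ℝ (fderiv ℝ F) (c θ) Δ) θ := by
      have := ((hdf (c θ)).hasFDerivAt).comp_hasDerivAt θ (hcd θ)
      exact this
    have := h1.clm_apply (hasDerivAt_const θ Δ)
    simpa using this
  -- bound on variation of second derivative along the segment
  have hvar : ∀ θ ∈ Set.Icc (0:ℝ) 1,
      ‖fderiv ℝ (fderiv ℝ F) (c θ) Δ Δ - K‖ ≤ M := by
    intro θ hθ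
    rw [hK, Real.norm_eq_abs]
    refine le_trans (hH (c θ) x Δ Δ) ?_
    rw [hM]
    refine mul_le_mul_of_nonneg_right ?_ (norm_nonneg _)
    refine mul_le_mul_of_nonneg_right ?_ (norm_nonneg _)
    refine mul_le_mul_of_nonneg_left ?_ hC
    have h2 : ‖c θ - x‖ = |θ| * ‖Δ‖ := by
      rw [hc]; simp [norm_smul, Real.norm_eq_abs]
    refine Real.rpow_le_rpow (norm_nonneg _) ?_ hα.le
    rw [h2]
    calc |θ| * ‖Δ‖ ≤ 1 * ‖Δ‖ := by
          refine mul_le_mul_of_nonneg_right ?_ (norm_nonneg _)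
          rw [abs_of_nonneg hθ.1]; exact hθ.2
      _ = ‖Δ‖ := one_mul _
  -- ψ θ := g1 θ − θ K ; MVT gives |g1 θ − g1 0 − θ K| ≤ M θ
  have hψ : ∀ θ ∈ Set.Icc (0:ℝ) 1,
      ‖(fderiv ℝ F (c θ) Δ - θ * K) - (fderiv ℝ F (c 0) Δ - 0 * K)‖ ≤ M * (θ - 0) := by
    refine norm_image_sub_le_of_norm_deriv_le_segment'
      (f := fun θ => fderiv ℝ F (c θ) Δ - θ * K)
      (f' := fun θ => fderiv ℝ (fderiv ℝ F) (c θ) Δ Δ - K) ?_ ?_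
    · intro θ hθ
      exact ((hg1 θ).sub (hasDerivAt_mul_const K)).hasDerivWithinAt
    · intro θ hθ
      exact hvar θ (Set.mem_Icc.mpr ⟨hθ.1, hθ.2.le⟩)
  have he2 : |fderiv ℝ F (x + Δ) Δ - fderiv ℝ F x Δ - K| ≤ M := by
    have := hψ 1 (Set.mem_Icc.mpr ⟨zero_le_one, le_rfl⟩)
    rw [hc0, hc1] at this
    rw [← Real.norm_eq_abs]
    calc ‖fderiv ℝ F (x + Δ) Δ - fderiv ℝ F x Δ - K‖
        = ‖(fderiv ℝ F (x + Δ) Δ - 1 * K) - (fderiv ℝ F x Δ - 0 * K)‖ := by ring_nf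
      _ ≤ M * (1 - 0) := this
      _ = M := by ring
  refine ⟨?_, he2⟩
  -- φ θ := F (c θ) − θ (DF x Δ) − θ²/2 K
  have hg0 : ∀ θ : ℝ, HasDerivAt (fun θ => F (c θ)) (fderiv ℝ F (c θ) Δ) θ := by
    intro θ
    exact ((hdF (c θ)).hasFDerivAt).comp_hasDerivAt θ (hcd θ)
  have hφd : ∀ θ : ℝ, HasDerivAt
      (fun θ => F (c θ) - θ * (fderiv ℝ F x Δ) - θ ^ 2 / 2 * K)
      (fderiv ℝ F (c θ) Δ - fderiv ℝ F x Δ - θ * K) θ := by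
    intro θ
    have h2 : HasDerivAt (fun θ : ℝ => θ ^ 2 / 2 * K) (θ * K) θ := by
      have := (((hasDerivAt_pow 2 θ)).div_const 2).mul_const K
      refine this.congr_deriv ?_
      push_cast
      ring
    have := ((hg0 θ).sub (hasDerivAt_mul_const (fderiv ℝ F x Δ))).sub h2
    exact this
  have hφ : ∀ θ ∈ Set.Icc (0:ℝ) 1,
      ‖(F (c θ) - θ * (fderiv ℝ F x Δ) - θ ^ 2 / 2 * K)
        - (F (c 0) - 0 * (fderiv ℝ F x Δ) - 0 ^ 2 / 2 * K)‖ ≤ M * (θ - 0) := by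
    refine norm_image_sub_le_of_norm_deriv_le_segment'
      (f' := fun θ => fderiv ℝ F (c θ) Δ - fderiv ℝ F x Δ - θ * K)
      (fun θ _ => (hφd θ).hasDerivWithinAt) ?_
    intro θ hθ
    have := hψ θ (Set.mem_Icc.mpr ⟨hθ.1, hθ.2.le⟩)
    rw [hc0] at this
    calc ‖fderiv ℝ F (c θ) Δ - fderiv ℝ F x Δ - θ * K‖
        = ‖(fderiv ℝ F (c θ) Δ - θ * K) - (fderiv ℝ F x Δ - 0 * K)‖ := by ring_nf
      _ ≤ M * (θ - 0) := this
      _ ≤ M := by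
          have := hθ.2
          nlinarith
  have := hφ 1 (Set.mem_Icc.mpr ⟨zero_le_one, le_rfl⟩)
  rw [hc0, hc1] at this
  rw [← Real.norm_eq_abs]
  calc ‖F (x + Δ) - F x - fderiv ℝ F x Δ - K / 2‖
      = ‖(F (x + Δ) - 1 * (fderiv ℝ F x Δ) - 1 ^ 2 / 2 * K)
        - (F x - 0 * (fderiv ℝ F x Δ) - 0 ^ 2 / 2 * K)‖ := by ring_nf
    _ ≤ M * (1 - 0) := this
    _ = M := by ring

end calc1

section bilin

variable {d : ℕ}

lemma bilin_expand (A : (Fin d → ℝ) →L[ℝ] (Fin d → ℝ) →L[ℝ] ℝ) (v w : Fin d → ℝ) :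
    A v w = ∑ i, ∑ j, A (Pi.single i 1) (Pi.single j 1) * (v i * w j) := by
  have hv : v = ∑ i, v i • (Pi.single i 1 : Fin d → ℝ) := by
    rw [← Finset.univ_sum_single v]
    refine Finset.sum_congr rfl (fun i _ => ?_)
    ext j
    by_cases h : j = i <;> simp [Pi.single_apply, h]
  have hw : w = ∑ j, w j • (Pi.single j 1 : Fin d → ℝ) := by
    rw [← Finset.univ_sum_single w]
    refine Finset.sum_congr rfl (fun j _ => ?_)
    ext i
    by_cases h : i = j <;> simp [Pi.single_apply, h]
  have step1 : A v = ∑ i, v i • A (Pi.single i 1) := by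
    conv_lhs => rw [hv]
    rw [map_sum]
    exact Finset.sum_congr rfl (fun i _ => by rw [map_smul])
  have step2 : ∀ i, A (Pi.single i 1) w = ∑ j, w j * A (Pi.single i 1) (Pi.single j 1) := by
    intro i
    conv_lhs => rw [hw]
    rw [map_sum]
    exact Finset.sum_congr rfl (fun j _ => by rw [map_smul, smul_eq_mul])
  rw [step1, ContinuousLinearMap.sum_apply]
  refine Finset.sum_congr rfl (fun i _ => ?_)
  rw [ContinuousLinearMap.smul_apply, smul_eq_mul, step2, Finset.mul_sum]
  refine Finset.sum_congr rfl (fun j _ => by ring)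

end bilin

end FIto

namespace FIto

variable {T : ℝ} {d : ℕ}

lemma rpow_trick {a θ C q p α : ℝ} (hC : 0 ≤ C) (ha : 0 ≤ a) (haθ : a ≤ θ)
    (hp : 0 < p) (hα : 0 < α) (hq : q = 2 + α - p) (hqpos : 0 < q) :
    C * a ^ α * a * a ≤ C * (θ ^ q * a ^ p) := by
  rcases eq_or_lt_of_le ha with h0 | h0
  · rw [← h0, Real.zero_rpow hα.ne']
    have : (0:ℝ) ^ p = 0 := Real.zero_rpow hp.ne'
    rw [this]
    simp
  · have key : a ^ α * a * a = a ^ q * a ^ p := by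
      have h1 : a ^ α * a * a = a ^ (α + 2) := by
        rw [Real.rpow_add h0 α 2]
        have : a ^ (2:ℝ) = a * a := by
          rw [show (2:ℝ) = ((2:ℕ):ℝ) by norm_num, Real.rpow_natCast]
          ring
        rw [this]; ring
      have h2 : a ^ (α + 2) = a ^ q * a ^ p := by
        rw [← Real.rpow_add h0]
        congr 1
        rw [hq]; ring
      rw [h1, h2]
    rw [mul_assoc, mul_assoc, ← mul_assoc (a ^ α) a a, key]
    refine mul_le_mul_of_nonneg_left ?_ hC
    exact mul_le_mul_of_nonneg_right
      (Real.rpow_le_rpow h0.le haθ hqpos.le)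
      (Real.rpow_nonneg h0.le _)

lemma err_tendsto {π : ℕ → GridPartition 0 T} (hπ : IncreasingSeq π)
    {X : ℝ → Fin d → ℝ} (hXc : ContinuousOn X (Set.Icc 0 T))
    {C α p M : ℝ} (hC : 0 ≤ C) (hα : 0 < α) (hp : 0 < p) (hq : 0 < 2 + α - p) (hM0 : 0 ≤ M)
    (hM : ∀ n, ∑ k ∈ Finset.range (π n).n,
      ‖X (tN (π n) (k + 1)) - X (tN (π n) k)‖ ^ p ≤ M)
    (e : ℕ → ℕ → ℝ)
    (he : ∀ n k, |e n k| ≤ C * ‖X (tN (π n) (k + 1)) - X (tN (π n) k)‖ ^ α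
      * ‖X (tN (π n) (k + 1)) - X (tN (π n) k)‖ * ‖X (tN (π n) (k + 1)) - X (tN (π n) k)‖) :
    Tendsto (fun n => ∑ k ∈ Finset.range (π n).n, e n k) atTop (𝓝 0) := by
  have huc := isCompact_Icc.uniformContinuousOn_of_continuous hXc
  rw [Metric.uniformContinuousOn_iff] at huc
  rw [Metric.tendsto_atTop]
  intro ε hε
  set q : ℝ := 2 + α - p with hqdef
  set θ : ℝ := (ε / ((C + 1) * (M + 1))) ^ q⁻¹ with hθdef
  have hbase : 0 < ε / ((C + 1) * (M + 1)) := by positivity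
  have hθpos : 0 < θ := Real.rpow_pos_of_pos hbase _
  have hθq : θ ^ q = ε / ((C + 1) * (M + 1)) := Real.rpow_inv_rpow hbase.le hq.ne'
  obtain ⟨δ, hδ, hδ2⟩ := huc θ hθpos
  obtain ⟨N, hN⟩ := (hπ.2.eventually_lt_const hδ).exists_forall_of_atTop
  refine ⟨N, fun n hn => ?_⟩
  rw [Real.dist_eq, sub_zero]
  have hstep : ∀ k, ‖X (tN (π n) (k + 1)) - X (tN (π n) k)‖ ≤ θ := by
    intro k
    have h1 : dist (tN (π n) (k+1)) (tN (π n) k) < δ := by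
      rw [Real.dist_eq, abs_of_nonneg (by linarith [tN_mono (π n) (Nat.le_succ k)])]
      exact lt_of_le_of_lt (tN_step_le_mesh (π n) k) (hN n hn)
    have := hδ2 _ (tN_mem _ _) _ (tN_mem _ _) h1
    rw [dist_eq_norm] at this
    exact this.le
  calc |∑ k ∈ Finset.range (π n).n, e n k|
      ≤ ∑ k ∈ Finset.range (π n).n, |e n k| := Finset.abs_sum_le_sum_abs _ _
    _ ≤ ∑ k ∈ Finset.range (π n).n,
        C * (θ ^ q * ‖X (tN (π n) (k + 1)) - X (tN (π n) k)‖ ^ p) := by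
        refine Finset.sum_le_sum (fun k _ => ?_)
        refine (he n k).trans ?_
        exact rpow_trick hC (norm_nonneg _) (hstep k) hp hα hqdef hq
    _ = C * θ ^ q * ∑ k ∈ Finset.range (π n).n,
        ‖X (tN (π n) (k + 1)) - X (tN (π n) k)‖ ^ p := by
        rw [Finset.mul_sum]
        refine Finset.sum_congr rfl (fun k _ => by ring)
    _ ≤ C * θ ^ q * M := by
        refine mul_le_mul_of_nonneg_left (hM n) ?_
        positivity
    _ < ε := by
        have hθq' : 0 < θ ^ q := Real.rpow_pos_of_pos hθpos _
        have hkey : (C + 1) * (M + 1) * θ ^ q = ε := by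
          rw [hθq]; field_simp
        nlinarith

end FIto


open FIto

/-- pathwise Föllmer–Itô formula:
`F(X_T) = F(X_0) + γ-∫ DF(X) d^{π_n} X − ½(2γ−1) Σ_{i,j} ∫ D²_{i,j}F(X) d^{π_n}[X^i,X^j]`,
where both integrals are limits of Riemann sums along the partition sequence. -/
theorem pathwise_follmer_ito {d : ℕ} (T p α γ : ℝ) (hT : 0 < T)
    (hp : 1 ≤ p) (hp3 : p < 3) (hγ : γ ∈ Set.Icc (0 : ℝ) 1)
    (hα : α > max (p - 2) 0)
    (π : ℕ → GridPartition 0 T) (hπ : IncreasingSeq π)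
    (X : ℝ → Fin d → ℝ) (hX : MemVp p 0 T X)
    (F : (Fin d → ℝ) → ℝ) (hF : ContDiff ℝ 2 F)
    (hHolder : ∃ C : ℝ, ∀ x y : Fin d → ℝ,
      ‖iteratedFDeriv ℝ 2 F x - iteratedFDeriv ℝ 2 F y‖ ≤ C * ‖x - y‖ ^ α)
    (Q : Fin d → ℝ → ℝ) (QS : Fin d → Fin d → ℝ → ℝ)
    (hQ : ∀ i, HasQV π (fun t => X t i) (Q i))
    (hQS : ∀ i j, HasQV π (fun t => X t i + X t j) (QS i j)) :
    ∃ I : Fin d → Fin d → ℝ,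
      (∀ i j : Fin d,
        Tendsto (fun n => (π n).rsum (fun s t =>
            (fderiv ℝ (fderiv ℝ F) (X s) (Pi.single i 1) (Pi.single j 1)) *
              ((QS i j t - Q i t - Q j t) / 2 - (QS i j s - Q i s - Q j s) / 2)))
          atTop (𝓝 (I i j))) ∧
      Tendsto (fun n => (π n).rsum (fun s t =>
          fderiv ℝ F (X s) (X t - X s) +
            γ * (fderiv ℝ F (X t) (X t - X s) - fderiv ℝ F (X s) (X t - X s))))
        atTop
        (𝓝 (F (X T) - F (X 0) + (1 / 2) * (2 * γ - 1) * ∑ i, ∑ j, I i j)) := by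
  classical
  obtain ⟨C0, hH0⟩ := hHolder
  have hC : (0:ℝ) ≤ max C0 0 := le_max_right _ _
  have hH := holder_transfer hH0
  have hα0 : 0 < α := lt_of_le_of_lt (le_max_right (p - 2) 0) hα
  have hαp : 0 < 2 + α - p := by
    have := lt_of_le_of_lt (le_max_left (p - 2) 0) hα
    linarith
  have hp0 : 0 < p := lt_of_lt_of_le one_pos hp
  have hA : Continuous (fderiv ℝ (fderiv ℝ F)) :=
    (hF.fderiv_right (by norm_num : (1:WithTop ℕ∞) + 1 ≤ 2)).continuous_fderiv one_ne_zero
  have hhc : ∀ i j : Fin d, ContinuousOn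
      (fun s => fderiv ℝ (fderiv ℝ F) (X s) (Pi.single i 1) (Pi.single j 1))
      (Set.Icc 0 T) := fun i j =>
    ((hA.clm_apply continuous_const).clm_apply continuous_const).comp_continuousOn hX.1
  have hmain : ∀ i j : Fin d, ∃ L : ℝ,
      Tendsto (Sseq π (fun s => fderiv ℝ (fderiv ℝ F) (X s) (Pi.single i 1) (Pi.single j 1))
        (Bfun (Q i) (Q j) (QS i j))) atTop (𝓝 L) ∧
      Tendsto (Thseq π (fun s => fderiv ℝ (fderiv ℝ F) (X s) (Pi.single i 1) (Pi.single j 1))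
        (fun t => X t i) (fun t => X t j)) atTop (𝓝 L) :=
    fun i j => main_pair hT hπ (hQ i) (hQ j) (hQS i j) _ (hhc i j)
  choose L hS hTh using hmain
  refine ⟨L, fun i j => ?_, ?_⟩
  · have heq : (fun n => (π n).rsum (fun s t =>
        (fderiv ℝ (fderiv ℝ F) (X s) (Pi.single i 1) (Pi.single j 1)) *
          ((QS i j t - Q i t - Q j t) / 2 - (QS i j s - Q i s - Q j s) / 2)))
        = Sseq π (fun s => fderiv ℝ (fderiv ℝ F) (X s) (Pi.single i 1) (Pi.single j 1))
          (Bfun (Q i) (Q j) (QS i j)) := by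
      funext n
      rw [rsum_eq]
      rfl
    rw [heq]
    exact hS i j
  -- second limit
  obtain ⟨M0, hM0⟩ := hX.2
  have hMr : ∀ n, ∑ k ∈ Finset.range (π n).n,
      ‖X (tN (π n) (k + 1)) - X (tN (π n) k)‖ ^ p ≤ max M0 0 := by
    intro n
    have h1 : (∑ i : Fin (π n).n, ‖X ((π n).t i.succ) - X ((π n).t i.castSucc)‖ ^ p)
        = (π n).rsum (fun s t => ‖X t - X s‖ ^ p) := rfl
    have h2 := hM0 (π n)
    rw [h1, rsum_eq] at h2
    exact h2.trans (le_max_left _ _)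
  set Δf : ℕ → ℕ → (Fin d → ℝ) :=
    fun n k => X (tN (π n) (k + 1)) - X (tN (π n) k) with hΔf
  set e1 : ℕ → ℕ → ℝ := fun n k =>
    F (X (tN (π n) (k + 1))) - F (X (tN (π n) k))
      - fderiv ℝ F (X (tN (π n) k)) (Δf n k)
      - fderiv ℝ (fderiv ℝ F) (X (tN (π n) k)) (Δf n k) (Δf n k) / 2 with he1def
  set e2 : ℕ → ℕ → ℝ := fun n k =>
    fderiv ℝ F (X (tN (π n) (k + 1))) (Δf n k)
      - fderiv ℝ F (X (tN (π n) k)) (Δf n k)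
      - fderiv ℝ (fderiv ℝ F) (X (tN (π n) k)) (Δf n k) (Δf n k) with he2def
  have htay : ∀ n k,
      |e1 n k| ≤ max C0 0 * ‖Δf n k‖ ^ α * ‖Δf n k‖ * ‖Δf n k‖ ∧
      |e2 n k| ≤ max C0 0 * ‖Δf n k‖ ^ α * ‖Δf n k‖ * ‖Δf n k‖ := by
    intro n k
    have hadd : X (tN (π n) k) + Δf n k = X (tN (π n) (k + 1)) := by
      ext l
      simp only [hΔf, Pi.add_apply, Pi.sub_apply]
      ring
    have := taylor_est hF hC hα0 hH (X (tN (π n) k)) (Δf n k)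
    rw [hadd] at this
    exact this
  have hE1 : Tendsto (fun n => ∑ k ∈ Finset.range (π n).n, e1 n k) atTop (𝓝 0) :=
    err_tendsto hπ hX.1 hC hα0 hp0 hαp (le_max_right _ _) hMr e1 (fun n k => (htay n k).1)
  have hE2 : Tendsto (fun n => ∑ k ∈ Finset.range (π n).n, e2 n k) atTop (𝓝 0) :=
    err_tendsto hπ hX.1 hC hα0 hp0 hαp (le_max_right _ _) hMr e2 (fun n k => (htay n k).2)
  -- the quadratic sums
  have hDeq : ∀ n, ∑ k ∈ Finset.range (π n).n,
      fderiv ℝ (fderiv ℝ F) (X (tN (π n) k)) (Δf n k) (Δf n k)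
      = ∑ i, ∑ j, Thseq π
          (fun s => fderiv ℝ (fderiv ℝ F) (X s) (Pi.single i 1) (Pi.single j 1))
          (fun t => X t i) (fun t => X t j) n := by
    intro n
    have hterm : ∀ k ∈ Finset.range (π n).n,
        fderiv ℝ (fderiv ℝ F) (X (tN (π n) k)) (Δf n k) (Δf n k)
        = ∑ i, ∑ j, fderiv ℝ (fderiv ℝ F) (X (tN (π n) k)) (Pi.single i 1) (Pi.single j 1)
            * (Δf n k i * Δf n k j) :=
      fun k _ => bilin_expand _ _ _
    rw [Finset.sum_congr rfl hterm, Finset.sum_comm]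
    refine Finset.sum_congr rfl (fun i _ => ?_)
    rw [Finset.sum_comm]
    refine Finset.sum_congr rfl (fun j _ => ?_)
    refine Finset.sum_congr rfl (fun k _ => ?_)
    simp only [Thseq, inc, hΔf, Pi.sub_apply]
    try ring
  have hDt : Tendsto (fun n => ∑ k ∈ Finset.range (π n).n,
      fderiv ℝ (fderiv ℝ F) (X (tN (π n) k)) (Δf n k) (Δf n k)) atTop
      (𝓝 (∑ i, ∑ j, L i j)) := by
    have : Tendsto (fun n => ∑ i, ∑ j, Thseq π
        (fun s => fderiv ℝ (fderiv ℝ F) (X s) (Pi.single i 1) (Pi.single j 1))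
        (fun t => X t i) (fun t => X t j) n) atTop (𝓝 (∑ i, ∑ j, L i j)) :=
      tendsto_finset_sum _ (fun i _ => tendsto_finset_sum _ (fun j _ => hTh i j))
    exact this.congr (fun n => (hDeq n).symm)
  -- exact decomposition of the Riemann sums
  have hGeq : ∀ n, (π n).rsum (fun s t =>
      fderiv ℝ F (X s) (X t - X s) +
        γ * (fderiv ℝ F (X t) (X t - X s) - fderiv ℝ F (X s) (X t - X s)))
      = (F (X T) - F (X 0))
        + ((γ - 1/2) * ∑ k ∈ Finset.range (π n).n,
            fderiv ℝ (fderiv ℝ F) (X (tN (π n) k)) (Δf n k) (Δf n k)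
          + (γ * ∑ k ∈ Finset.range (π n).n, e2 n k
            - ∑ k ∈ Finset.range (π n).n, e1 n k)) := by
    intro n
    rw [rsum_eq]
    have hterm : ∀ k ∈ Finset.range (π n).n,
        (fderiv ℝ F (X (tN (π n) k)) (X (tN (π n) (k+1)) - X (tN (π n) k)) +
          γ * (fderiv ℝ F (X (tN (π n) (k+1))) (X (tN (π n) (k+1)) - X (tN (π n) k))
            - fderiv ℝ F (X (tN (π n) k)) (X (tN (π n) (k+1)) - X (tN (π n) k))))
        = ((F (X (tN (π n) (k+1))) - F (X (tN (π n) k)))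
          + ((γ - 1/2) * fderiv ℝ (fderiv ℝ F) (X (tN (π n) k)) (Δf n k) (Δf n k)
            + (γ * e2 n k - e1 n k))) := by
      intro k _
      simp only [he1def, he2def, hΔf]
      ring
    rw [Finset.sum_congr rfl hterm, Finset.sum_add_distrib, Finset.sum_add_distrib,
      sum_telescope (π n) (fun u => F (X u)),
      Finset.sum_sub_distrib,
      Finset.mul_sum (Finset.range (π n).n) (fun k => e2 n k) γ,
      Finset.mul_sum (Finset.range (π n).n)
        (fun k => fderiv ℝ (fderiv ℝ F) (X (tN (π n) k)) (Δf n k) (Δf n k)) (γ - 1/2)]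
  have hfinal : Tendsto (fun n => (F (X T) - F (X 0))
      + ((γ - 1/2) * ∑ k ∈ Finset.range (π n).n,
          fderiv ℝ (fderiv ℝ F) (X (tN (π n) k)) (Δf n k) (Δf n k)
        + (γ * ∑ k ∈ Finset.range (π n).n, e2 n k
          - ∑ k ∈ Finset.range (π n).n, e1 n k))) atTop
      (𝓝 ((F (X T) - F (X 0)) + ((γ - 1/2) * ∑ i, ∑ j, L i j + (γ * 0 - 0)))) :=
    tendsto_const_nhds.add ((hDt.const_mul _).add ((hE2.const_mul γ).sub hE1))
  have hval : (F (X T) - F (X 0)) + ((γ - 1/2) * ∑ i, ∑ j, L i j + (γ * 0 - 0))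
      = F (X T) - F (X 0) + (1 / 2) * (2 * γ - 1) * ∑ i, ∑ j, L i j := by ring
  rw [hval] at hfinal
  exact hfinal.congr (fun n => (hGeq n).symm)
end

section
/- Let Y ∈ C_X^q with Gubinelli derivative Y'_t antisymmetric for all t ∈ [0,T], X ∈ V^p([0,T], R^d), with 2/p + 1/q > 1. Then for every γ ∈ [0,1] the symmetric part S_γ⟨X,Y⟩ := lim_{|π|→0} Σ_{[s,t]∈π} (⟨Y_s + γ(Y_t−Y_s), X_t−X_s⟩ + ⟨X_s + γ(X_t−X_s), Y_t−Y_s⟩) exists. -/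
open Finset Filter Topology

section Aux

open Finset

lemma dot_abs_le {d : ℕ} (u v : Fin d → ℝ) : |dot u v| ≤ d * (‖u‖ * ‖v‖) := by
  calc |dot u v| ≤ ∑ i, |u i * v i| := Finset.abs_sum_le_sum_abs _ _
    _ ≤ ∑ _i : Fin d, ‖u‖ * ‖v‖ := by
        refine Finset.sum_le_sum fun i _ => ?_
        rw [abs_mul]
        have h1 : |u i| ≤ ‖u‖ := by
          simpa [Real.norm_eq_abs] using norm_le_pi_norm u i
        have h2 : |v i| ≤ ‖v‖ := by
          simpa [Real.norm_eq_abs] using norm_le_pi_norm v i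
        exact mul_le_mul h1 h2 (abs_nonneg _) (norm_nonneg _)
    _ = d * (‖u‖ * ‖v‖) := by
        simp [Finset.sum_const, Finset.card_univ, mul_assoc]

lemma norm_mulVec'_le {d : ℕ} (M : Fin d → Fin d → ℝ) (v : Fin d → ℝ) :
    ‖mulVec' M v‖ ≤ d * (‖M‖ * ‖v‖) := by
  refine (pi_norm_le_iff_of_nonneg (by positivity)).mpr fun i => ?_
  have : ‖mulVec' M v i‖ = |∑ j, M i j * v j| := rfl
  rw [this]
  calc |∑ j, M i j * v j| ≤ ∑ j, |M i j * v j| := Finset.abs_sum_le_sum_abs _ _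
    _ ≤ ∑ _j : Fin d, ‖M‖ * ‖v‖ := by
        refine Finset.sum_le_sum fun j _ => ?_
        rw [abs_mul]
        have h1 : |M i j| ≤ ‖M‖ := by
          have a1 : ‖M i j‖ ≤ ‖M i‖ := norm_le_pi_norm (M i) j
          have a2 : ‖M i‖ ≤ ‖M‖ := norm_le_pi_norm M i
          simpa [Real.norm_eq_abs] using a1.trans a2
        have h2 : |v j| ≤ ‖v‖ := by
          simpa [Real.norm_eq_abs] using norm_le_pi_norm v j
        exact mul_le_mul h1 h2 (abs_nonneg _) (norm_nonneg _)
    _ = d * (‖M‖ * ‖v‖) := by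
        simp [Finset.sum_const, Finset.card_univ, mul_assoc]

lemma dot_mulVec'_self {d : ℕ} (M : Fin d → Fin d → ℝ)
    (hM : ∀ i j, M i j = - M j i) (v : Fin d → ℝ) : dot v (mulVec' M v) = 0 := by
  have h1 : dot v (mulVec' M v) = ∑ i, ∑ j, v i * M i j * v j := by
    simp [dot, mulVec', Finset.mul_sum, mul_assoc]
  have key : (∑ j, ∑ i, v i * M i j * v j) = ∑ i, ∑ j, -(v i * M i j * v j) := by
    refine Finset.sum_congr rfl fun x _ => Finset.sum_congr rfl fun y _ => ?_
    rw [hM y x]; ring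
  have h2 : (∑ i, ∑ j, v i * M i j * v j) = -∑ i, ∑ j, v i * M i j * v j := by
    conv_lhs => rw [Finset.sum_comm, key]
    simp only [Finset.sum_neg_distrib]
  rw [h1]; linarith [h2]

lemma dot_sub_right' {d : ℕ} (x y z : Fin d → ℝ) : dot x (y - z) = dot x y - dot x z := by
  simp [dot, mul_sub, Finset.sum_sub_distrib]

lemma key_id {d : ℕ} (γ : ℝ) (Xs Xt Ys Yt : Fin d → ℝ) (M : Fin d → Fin d → ℝ)
    (hM : ∀ i j, M i j = - M j i) :
    dot (Ys + γ • (Yt - Ys)) (Xt - Xs) + dot (Xs + γ • (Xt - Xs)) (Yt - Ys)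
      = (dot Xt Yt - dot Xs Ys)
        + (2 * γ - 1) * dot (Xt - Xs) (Yt - Ys - mulVec' M (Xt - Xs)) := by
  have hz : dot (Xt - Xs) (mulVec' M (Xt - Xs)) = 0 := dot_mulVec'_self M hM _
  rw [show dot (Xt - Xs) (Yt - Ys - mulVec' M (Xt - Xs))
      = dot (Xt - Xs) (Yt - Ys) - dot (Xt - Xs) (mulVec' M (Xt - Xs)) from
    dot_sub_right' _ _ _, hz, sub_zero]
  have hterm : ∀ i, (Ys i + γ * (Yt i - Ys i)) * (Xt i - Xs i)
      + (Xs i + γ * (Xt i - Xs i)) * (Yt i - Ys i)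
      = (Xt i * Yt i - Xs i * Ys i) + (2 * γ - 1) * ((Xt i - Xs i) * (Yt i - Ys i)) :=
    fun i => by ring
  simp only [dot, Pi.add_apply, Pi.sub_apply, Pi.smul_apply, smul_eq_mul,
    ← Finset.sum_add_distrib, ← Finset.sum_sub_distrib, ← Finset.mul_sum]
  rw [Finset.mul_sum, ← Finset.sum_add_distrib]
  exact Finset.sum_congr rfl fun i _ => hterm i

lemma telescope_fin : ∀ {n : ℕ} (g : Fin (n + 1) → ℝ),
    (∑ i : Fin n, (g i.succ - g i.castSucc)) = g (Fin.last n) - g 0 := by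
  intro n
  induction n with
  | zero => intro g; simp
  | succ n ih =>
    intro g
    rw [Fin.sum_univ_castSucc]
    simp only [Fin.succ_castSucc]
    rw [ih (fun j => g j.castSucc)]
    simp only [Fin.succ_last]
    have : (Fin.last n).castSucc = (0 : Fin (n+2)) → True := fun _ => trivial
    rw [Fin.castSucc_zero]
    ring

lemma split_pow {θ a b η K : ℝ} (hθ0 : 0 < θ) (hθ1 : θ < 1)
    (ha : 0 ≤ a) (hb : 0 ≤ b) (haη : a ≤ η) (hbK : b ≤ K) :
    a * b ≤ (η ^ θ * K ^ θ) * (a ^ (1 - θ) * b ^ (1 - θ)) := by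
  have hne : θ + (1 - θ) ≠ 0 := by norm_num
  have ea : a ^ θ * a ^ (1 - θ) = a := by
    rw [← Real.rpow_add' ha hne]; norm_num
  have eb : b ^ θ * b ^ (1 - θ) = b := by
    rw [← Real.rpow_add' hb hne]; norm_num
  calc a * b = (a ^ θ * b ^ θ) * (a ^ (1 - θ) * b ^ (1 - θ)) := by
        calc a * b = (a ^ θ * a ^ (1 - θ)) * (b ^ θ * b ^ (1 - θ)) := by rw [ea, eb]
          _ = (a ^ θ * b ^ θ) * (a ^ (1 - θ) * b ^ (1 - θ)) := by ring
    _ ≤ (η ^ θ * K ^ θ) * (a ^ (1 - θ) * b ^ (1 - θ)) := by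
        have h1 : a ^ θ ≤ η ^ θ := Real.rpow_le_rpow ha haη hθ0.le
        have h2 : b ^ θ ≤ K ^ θ := Real.rpow_le_rpow hb hbK hθ0.le
        have := mul_le_mul h1 h2 (Real.rpow_nonneg hb θ) (Real.rpow_nonneg (ha.trans haη) θ)
        exact mul_le_mul_of_nonneg_right this (by positivity)

end Aux

theorem symmetric_part_exists_of_antisym {d : ℕ} (T p q r : ℝ) (hT : 0 < T)
    (hp : 0 < p) (hq : 0 < q) (hexp : 2 / p + 1 / q > 1) (hr : 1 / r = 1 / p + 1 / q)
    (X Y : ℝ → Fin d → ℝ) (Y' : ℝ → Fin d → Fin d → ℝ)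
    (hX : MemVp p 0 T X) (hY : MemVp p 0 T Y)
    (hctrl : Controlled q r 0 T X Y Y')
    (hantisym : ∀ t ∈ Set.Icc (0 : ℝ) T, ∀ i j : Fin d, Y' t i j = -Y' t j i) :
    ∀ γ ∈ Set.Icc (0 : ℝ) 1, ∃ S : ℝ,
      RiemannLimit 0 T
        (fun s t => dot (Y s + γ • (Y t - Y s)) (X t - X s) +
          dot (X s + γ • (X t - X s)) (Y t - Y s)) S := by
  intro γ hγ
  obtain ⟨hXc, MX, hMX⟩ := hX
  obtain ⟨hYc, -⟩ := hY
  obtain ⟨⟨hY'c, -⟩, MR, hMR⟩ := hctrl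
  have hIcc : IsCompact (Set.Icc (0:ℝ) T) := isCompact_Icc
  obtain ⟨BX, hBX⟩ := hIcc.exists_bound_of_continuousOn hXc
  obtain ⟨BY, hBY⟩ := hIcc.exists_bound_of_continuousOn hYc
  obtain ⟨BY', hBY'⟩ := hIcc.exists_bound_of_continuousOn hY'c
  set K : ℝ := max (2 * BY + d * (BY' * (2 * BX))) 1 with hKdef
  have hK1 : (1:ℝ) ≤ K := le_max_right _ _
  have hK0 : (0:ℝ) < K := lt_of_lt_of_le one_pos hK1
  set R : ℝ → ℝ → Fin d → ℝ :=
    fun s t => Y t - Y s - mulVec' (Y' s) (X t - X s) with hRdef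
  have hRbound : ∀ s ∈ Set.Icc (0:ℝ) T, ∀ t ∈ Set.Icc (0:ℝ) T, ‖R s t‖ ≤ K := by
    intro s hs t ht
    have hBX0 : 0 ≤ BX := le_trans (norm_nonneg _) (hBX 0 (Set.left_mem_Icc.mpr hT.le))
    have hBY'0 : 0 ≤ BY' := le_trans (norm_nonneg _) (hBY' 0 (Set.left_mem_Icc.mpr hT.le))
    have h1 : ‖R s t‖ ≤ ‖Y t - Y s‖ + ‖mulVec' (Y' s) (X t - X s)‖ := norm_sub_le _ _
    have h2 : ‖Y t - Y s‖ ≤ 2 * BY := by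
      calc ‖Y t - Y s‖ ≤ ‖Y t‖ + ‖Y s‖ := norm_sub_le _ _
        _ ≤ BY + BY := add_le_add (hBY t ht) (hBY s hs)
        _ = 2 * BY := by ring
    have h3 : ‖mulVec' (Y' s) (X t - X s)‖ ≤ d * (BY' * (2 * BX)) := by
      calc ‖mulVec' (Y' s) (X t - X s)‖ ≤ d * (‖Y' s‖ * ‖X t - X s‖) := norm_mulVec'_le _ _
        _ ≤ d * (BY' * (2 * BX)) := by
            refine mul_le_mul_of_nonneg_left ?_ (Nat.cast_nonneg d)
            refine mul_le_mul (hBY' s hs) ?_ (norm_nonneg _) hBY'0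
            calc ‖X t - X s‖ ≤ ‖X t‖ + ‖X s‖ := norm_sub_le _ _
              _ ≤ BX + BX := add_le_add (hBX t ht) (hBX s hs)
              _ = 2 * BX := by ring
    calc ‖R s t‖ ≤ 2 * BY + d * (BY' * (2 * BX)) := by linarith
      _ ≤ K := le_max_left _ _
  have hr0 : 0 < r := by
    have h : 0 < 1 / r := by rw [hr]; positivity
    exact one_div_pos.mp h
  set σ : ℝ := 1 / p + 1 / r with hσdef
  have hσ1 : 1 < σ := by
    have h : σ = 2 / p + 1 / q := by rw [hσdef, hr]; ring
    rw [h]; exact hexp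
  have hσ0 : 0 < σ := lt_trans one_pos hσ1
  set θ : ℝ := 1 - 1 / σ with hθdef
  have hθ0 : 0 < θ := by
    have h : 1 / σ < 1 := by rw [div_lt_one hσ0]; exact hσ1
    rw [hθdef]; linarith
  have hθ1 : θ < 1 := by
    have h : 0 < 1 / σ := by positivity
    rw [hθdef]; linarith
  set u : ℝ := p * σ with hudef
  set v : ℝ := r * σ with hvdef
  have hu0 : 0 < u := by positivity
  have hv0 : 0 < v := by positivity
  have huv : Real.HolderConjugate u v := by
    rw [Real.holderConjugate_iff]
    constructor
    · rw [hudef, hσdef]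
      have h : p * (1 / p + 1 / r) = 1 + p / r := by field_simp
      rw [h]
      have : 0 < p / r := by positivity
      linarith
    · rw [hudef, hvdef, hσdef]
      field_simp
  have h1θ : 1 - θ = 1 / σ := by rw [hθdef]; ring
  have hu1 : (1 - θ) * u = p := by
    rw [h1θ, hudef]; field_simp
  have hv1 : (1 - θ) * v = r := by
    rw [h1θ, hvdef]; field_simp
  set MX1 : ℝ := max MX 0 with hMX1def
  set MR1 : ℝ := max MR 0 with hMR1def
  have hMX1 : 0 ≤ MX1 := le_max_right _ _
  have hMR1 : 0 ≤ MR1 := le_max_right _ _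
  set C : ℝ := d * K ^ θ * MX1 ^ (1/u) * MR1 ^ (1/v) with hCdef
  have hC0 : 0 ≤ C := by positivity
  refine ⟨dot (X T) (Y T) - dot (X 0) (Y 0), ?_⟩
  intro ε hε
  set η : ℝ := ((ε/2) / (C+1)) ^ (1/θ) with hηdef
  have hbase : 0 < (ε/2) / (C+1) := by positivity
  have hη0 : 0 < η := Real.rpow_pos_of_pos hbase _
  have hηθ : η ^ θ = (ε/2) / (C+1) := by
    rw [hηdef, one_div, Real.rpow_inv_rpow hbase.le (ne_of_gt hθ0)]
  have hucX : UniformContinuousOn X (Set.Icc 0 T) :=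
    hIcc.uniformContinuousOn_of_continuous hXc
  rw [Metric.uniformContinuousOn_iff] at hucX
  obtain ⟨δ, hδ0, hδ⟩ := hucX η hη0
  refine ⟨δ, hδ0, ?_⟩
  intro π hmesh
  have hmem : ∀ i : Fin (π.n + 1), π.t i ∈ Set.Icc (0:ℝ) T := by
    intro i
    constructor
    · have h := π.mono (Fin.zero_le i); rwa [π.first] at h
    · have h := π.mono (Fin.le_last i); rwa [π.last] at h
  have hlen : ∀ i : Fin π.n, π.t i.succ - π.t i.castSucc < δ := by
    intro i
    have hb : BddAbove (Set.range fun i : Fin π.n => π.t i.succ - π.t i.castSucc) :=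
      (Set.finite_range _).bddAbove
    calc π.t i.succ - π.t i.castSucc ≤ π.mesh := le_ciSup hb i
      _ < δ := hmesh
  set a : Fin π.n → ℝ := fun i => ‖X (π.t i.succ) - X (π.t i.castSucc)‖ with hadef
  set b : Fin π.n → ℝ := fun i => ‖R (π.t i.castSucc) (π.t i.succ)‖ with hbdef
  have ha0 : ∀ i, 0 ≤ a i := fun i => norm_nonneg _
  have hb0 : ∀ i, 0 ≤ b i := fun i => norm_nonneg _
  have haη : ∀ i, a i ≤ η := by
    intro i
    have hle : π.t i.castSucc ≤ π.t i.succ := π.mono (Fin.castSucc_le_succ i)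
    have hdist : dist (π.t i.succ) (π.t i.castSucc) < δ := by
      rw [Real.dist_eq, abs_of_nonneg (by linarith)]
      exact hlen i
    have h := hδ (π.t i.succ) (hmem _) (π.t i.castSucc) (hmem _) hdist
    rw [dist_eq_norm] at h
    exact le_of_lt h
  have hbK : ∀ i, b i ≤ K := fun i => hRbound _ (hmem _) _ (hmem _)
  -- rewrite the Riemann sum
  have hsplit : π.rsum (fun s t => dot (Y s + γ • (Y t - Y s)) (X t - X s) +
      dot (X s + γ • (X t - X s)) (Y t - Y s))
      = (dot (X T) (Y T) - dot (X 0) (Y 0)) + (2 * γ - 1) *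
        ∑ i : Fin π.n, dot (X (π.t i.succ) - X (π.t i.castSucc))
          (R (π.t i.castSucc) (π.t i.succ)) := by
    have hterm : ∀ i : Fin π.n,
        dot (Y (π.t i.castSucc) + γ • (Y (π.t i.succ) - Y (π.t i.castSucc)))
            (X (π.t i.succ) - X (π.t i.castSucc)) +
          dot (X (π.t i.castSucc) + γ • (X (π.t i.succ) - X (π.t i.castSucc)))
            (Y (π.t i.succ) - Y (π.t i.castSucc))
        = (dot (X (π.t i.succ)) (Y (π.t i.succ)) -
            dot (X (π.t i.castSucc)) (Y (π.t i.castSucc)))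
          + (2 * γ - 1) * dot (X (π.t i.succ) - X (π.t i.castSucc))
              (R (π.t i.castSucc) (π.t i.succ)) := by
      intro i
      exact key_id γ _ _ _ _ (Y' (π.t i.castSucc))
        (fun a b => hantisym _ (hmem _) a b)
    calc π.rsum (fun s t => dot (Y s + γ • (Y t - Y s)) (X t - X s) +
          dot (X s + γ • (X t - X s)) (Y t - Y s))
        = ∑ i : Fin π.n, ((dot (X (π.t i.succ)) (Y (π.t i.succ)) -
            dot (X (π.t i.castSucc)) (Y (π.t i.castSucc)))
          + (2 * γ - 1) * dot (X (π.t i.succ) - X (π.t i.castSucc))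
              (R (π.t i.castSucc) (π.t i.succ))) := by
          rw [GridPartition.rsum]
          exact Finset.sum_congr rfl fun i _ => hterm i
      _ = (dot (X T) (Y T) - dot (X 0) (Y 0)) + (2 * γ - 1) *
          ∑ i : Fin π.n, dot (X (π.t i.succ) - X (π.t i.castSucc))
            (R (π.t i.castSucc) (π.t i.succ)) := by
          rw [Finset.sum_add_distrib, ← Finset.mul_sum,
            telescope_fin (fun j => dot (X (π.t j)) (Y (π.t j))), π.first, π.last]
  rw [hsplit, add_sub_cancel_left]
  -- the estimate
  have hγabs : |2 * γ - 1| ≤ 1 := by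
    obtain ⟨h1, h2⟩ := hγ
    rw [abs_le]; constructor <;> linarith
  have step1 : ‖(2 * γ - 1) * ∑ i : Fin π.n,
      dot (X (π.t i.succ) - X (π.t i.castSucc)) (R (π.t i.castSucc) (π.t i.succ))‖
      ≤ (d : ℝ) * ∑ i : Fin π.n, a i * b i := by
    rw [Real.norm_eq_abs, abs_mul]
    calc |2 * γ - 1| * |∑ i : Fin π.n,
        dot (X (π.t i.succ) - X (π.t i.castSucc)) (R (π.t i.castSucc) (π.t i.succ))|
        ≤ 1 * |∑ i : Fin π.n,
          dot (X (π.t i.succ) - X (π.t i.castSucc)) (R (π.t i.castSucc) (π.t i.succ))| :=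
          mul_le_mul_of_nonneg_right hγabs (abs_nonneg _)
      _ = |∑ i : Fin π.n,
          dot (X (π.t i.succ) - X (π.t i.castSucc)) (R (π.t i.castSucc) (π.t i.succ))| :=
          one_mul _
      _ ≤ ∑ i : Fin π.n,
          |dot (X (π.t i.succ) - X (π.t i.castSucc)) (R (π.t i.castSucc) (π.t i.succ))| :=
          Finset.abs_sum_le_sum_abs _ _
      _ ≤ ∑ i : Fin π.n, (d : ℝ) * (a i * b i) :=
          Finset.sum_le_sum fun i _ => dot_abs_le _ _
      _ = (d : ℝ) * ∑ i : Fin π.n, a i * b i := by rw [Finset.mul_sum]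
  have step2 : ∑ i : Fin π.n, a i * b i
      ≤ (η ^ θ * K ^ θ) * ∑ i : Fin π.n, a i ^ (1 - θ) * b i ^ (1 - θ) := by
    rw [Finset.mul_sum]
    exact Finset.sum_le_sum fun i _ => split_pow hθ0 hθ1 (ha0 i) (hb0 i) (haη i) (hbK i)
  have step3 : ∑ i : Fin π.n, a i ^ (1 - θ) * b i ^ (1 - θ)
      ≤ MX1 ^ (1/u) * MR1 ^ (1/v) := by
    have hhold := Real.inner_le_Lp_mul_Lq (s := Finset.univ)
      (fun i => a i ^ (1 - θ)) (fun i => b i ^ (1 - θ)) huv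
    have hsumA : ∑ i : Fin π.n, a i ^ p ≤ MX1 := by
      calc ∑ i : Fin π.n, a i ^ p
          = ∑ i : Fin π.n, ‖X (π.t i.succ) - X (π.t i.castSucc)‖ ^ p := by
            simp only [hadef]
        _ ≤ MX := hMX π
        _ ≤ MX1 := le_max_left _ _
    have hsumB : ∑ i : Fin π.n, b i ^ r ≤ MR1 := by
      calc ∑ i : Fin π.n, b i ^ r
          = ∑ i : Fin π.n, ‖R (π.t i.castSucc) (π.t i.succ)‖ ^ r := by
            simp only [hbdef]
        _ ≤ MR := hMR π
        _ ≤ MR1 := le_max_left _ _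
    have hA : ∀ i : Fin π.n, |a i ^ (1 - θ)| ^ u = a i ^ p := by
      intro i
      rw [abs_of_nonneg (Real.rpow_nonneg (ha0 i) _), ← Real.rpow_mul (ha0 i), hu1]
    have hB : ∀ i : Fin π.n, |b i ^ (1 - θ)| ^ v = b i ^ r := by
      intro i
      rw [abs_of_nonneg (Real.rpow_nonneg (hb0 i) _), ← Real.rpow_mul (hb0 i), hv1]
    calc ∑ i : Fin π.n, a i ^ (1 - θ) * b i ^ (1 - θ)
        ≤ (∑ i : Fin π.n, |a i ^ (1 - θ)| ^ u) ^ (1/u) *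
            (∑ i : Fin π.n, |b i ^ (1 - θ)| ^ v) ^ (1/v) := hhold
      _ = (∑ i : Fin π.n, a i ^ p) ^ (1/u) * (∑ i : Fin π.n, b i ^ r) ^ (1/v) := by
          simp_rw [hA, hB]
      _ ≤ MX1 ^ (1/u) * MR1 ^ (1/v) := by
          refine mul_le_mul ?_ ?_ (Real.rpow_nonneg ?_ _) (Real.rpow_nonneg hMX1 _)
          · exact Real.rpow_le_rpow (Finset.sum_nonneg fun i _ => Real.rpow_nonneg (ha0 i) _)
              hsumA (by positivity)
          · exact Real.rpow_le_rpow (Finset.sum_nonneg fun i _ => Real.rpow_nonneg (hb0 i) _)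
              hsumB (by positivity)
          · exact Finset.sum_nonneg fun i _ => Real.rpow_nonneg (hb0 i) _
  calc ‖(2 * γ - 1) * ∑ i : Fin π.n,
      dot (X (π.t i.succ) - X (π.t i.castSucc)) (R (π.t i.castSucc) (π.t i.succ))‖
      ≤ (d : ℝ) * ∑ i : Fin π.n, a i * b i := step1
    _ ≤ (d : ℝ) * ((η ^ θ * K ^ θ) * (MX1 ^ (1/u) * MR1 ^ (1/v))) := by
        refine mul_le_mul_of_nonneg_left ?_ (Nat.cast_nonneg d)
        exact step2.trans (mul_le_mul_of_nonneg_left step3 (by positivity))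
    _ = η ^ θ * C := by rw [hCdef]; ring
    _ = (ε/2) * (C / (C+1)) := by rw [hηθ]; ring
    _ ≤ (ε/2) * 1 := by
        refine mul_le_mul_of_nonneg_left ?_ (by linarith)
        exact div_le_one_of_le₀ (by linarith) (by linarith)
    _ < ε := by linarith
end
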